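/- Let x be a real number that has a signed digit representation and suppose 0 ≤ x. Then √x has a signed digit representation. -/

import Mathlib

open Filter

/-- A real number has a signed digit representation if it is the sum of a
series of digits in {-1, 0, 1} weighted by powers of 1/2. -/
def HasSDR (x : ℝ) : Prop :=
  ∃ d : ℕ → ℤ, (∀ i, d i = -1 ∨ d i = 0 ∨ d i = 1) ∧
    x = ∑' i : ℕ, (d i : ℝ) / 2 ^ (i + 1)

noncomputable def sdrDigit (r : ℝ) : ℤ :=
  if 1/2 ≤ r then 1 else if r ≤ -(1/2) then -1 else 0

noncomputable def sdrRem (x : ℝ) : ℕ → ℝ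
  | 0 => x
  | n+1 => 2 * sdrRem x n - sdrDigit (sdrRem x n)

lemma sdrRem_bound (x : ℝ) (hx : |x| ≤ 1) : ∀ n, |sdrRem x n| ≤ 1 := by
  intro n
  induction n with
  | zero => exact hx
  | succ n ih =>
    show |2 * sdrRem x n - (sdrDigit (sdrRem x n) : ℝ)| ≤ 1
    rw [abs_le] at ih ⊢
    unfold sdrDigit
    split_ifs with h1 h2 <;> push_cast <;> constructor <;> linarith

lemma sdr_partial (x : ℝ) :
    ∀ n, ∑ i ∈ Finset.range n, (sdrDigit (sdrRem x i) : ℝ) / 2 ^ (i + 1)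
      = x - sdrRem x n / 2 ^ n := by
  intro n
  induction n with
  | zero => simp [sdrRem]
  | succ n ih =>
    rw [Finset.sum_range_succ, ih]
    show _ = x - (2 * sdrRem x n - (sdrDigit (sdrRem x n) : ℝ)) / 2 ^ (n + 1)
    have h2 : (2:ℝ) ^ (n+1) ≠ 0 := by positivity
    have h1 : (2:ℝ) ^ n ≠ 0 := by positivity
    field_simp
    ring

lemma sdr_geom_summable : Summable fun i : ℕ => (1:ℝ) / 2 ^ (i + 1) := by
  have := summable_geometric_two' 1
  apply this.congr
  intro i
  rw [pow_succ]
  ring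

lemma sdr_geom_tsum : ∑' i : ℕ, (1:ℝ) / 2 ^ (i + 1) = 1 := by
  have h : (fun i : ℕ => (1:ℝ) / 2 ^ (i + 1)) = fun n : ℕ => 1 / 2 / 2 ^ n := by
    funext i; rw [pow_succ]; ring
  rw [h]
  exact tsum_geometric_two' 1

lemma sdr_term_bound (c : ℝ) (hc : |c| ≤ 1) (i : ℕ) :
    ‖c / 2 ^ (i + 1)‖ ≤ 1 / 2 ^ (i + 1) := by
  rw [Real.norm_eq_abs, abs_div, abs_pow, abs_two]
  gcongr

lemma sdrDigit_abs_le (r : ℝ) : |(sdrDigit r : ℝ)| ≤ 1 := by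
  unfold sdrDigit
  split_ifs <;> simp

lemma hasSDR_of_abs_le_one (x : ℝ) (hx : |x| ≤ 1) : HasSDR x := by
  refine ⟨fun i => sdrDigit (sdrRem x i), ?_, ?_⟩
  · intro i
    simp only [sdrDigit]
    split_ifs <;> simp
  · have hsummable : Summable fun i : ℕ => (sdrDigit (sdrRem x i) : ℝ) / 2 ^ (i + 1) :=
      Summable.of_norm_bounded sdr_geom_summable
        (fun i => sdr_term_bound _ (sdrDigit_abs_le _) i)
    have htend : Filter.Tendsto (fun n => ∑ i ∈ Finset.range n,
        (sdrDigit (sdrRem x i) : ℝ) / 2 ^ (i + 1)) atTop (nhds x) := by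
      have heq : (fun n => ∑ i ∈ Finset.range n,
          (sdrDigit (sdrRem x i) : ℝ) / 2 ^ (i + 1))
          = fun n => x - sdrRem x n / 2 ^ n := funext (sdr_partial x)
      rw [heq]
      have h0 : Filter.Tendsto (fun n : ℕ => sdrRem x n / 2 ^ n) atTop (nhds 0) := by
        have hg : Filter.Tendsto (fun n : ℕ => (1/2 : ℝ) ^ n) atTop (nhds 0) := by
          apply tendsto_pow_atTop_nhds_zero_of_lt_one <;> norm_num
        apply squeeze_zero_norm _ hg
        intro n
        rw [Real.norm_eq_abs, abs_div, abs_pow, abs_two, div_pow, one_pow]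
        gcongr
        exact sdrRem_bound x hx n
      have := tendsto_const_nhds (x := x) (f := atTop (α := ℕ)) |>.sub h0
      simpa using this
    exact ((Summable.hasSum_iff_tendsto_nat hsummable).mpr htend).tsum_eq.symm

lemma abs_le_one_of_hasSDR (x : ℝ) (hx : HasSDR x) : |x| ≤ 1 := by
  obtain ⟨d, hd, hxe⟩ := hx
  have hdb : ∀ i, |(d i : ℝ)| ≤ 1 := by
    intro i; rcases hd i with h | h | h <;> simp [h]
  have hnorm : Summable fun i : ℕ => ‖(d i : ℝ) / 2 ^ (i + 1)‖ :=
    Summable.of_nonneg_of_le (fun i => norm_nonneg _)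
      (fun i => sdr_term_bound _ (hdb i) i) sdr_geom_summable
  rw [hxe, ← Real.norm_eq_abs]
  calc ‖∑' i : ℕ, (d i : ℝ) / 2 ^ (i + 1)‖ ≤ ∑' i : ℕ, ‖(d i : ℝ) / 2 ^ (i + 1)‖ :=
        norm_tsum_le_tsum_norm hnorm
    _ ≤ ∑' i : ℕ, (1:ℝ) / 2 ^ (i + 1) :=
        Summable.tsum_le_tsum (fun i => sdr_term_bound _ (hdb i) i) hnorm sdr_geom_summable
    _ = 1 := sdr_geom_tsum

theorem sdr_sqrt (x : ℝ) (hx : HasSDR x) (hpos : 0 ≤ x) :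
    HasSDR (Real.sqrt x) := by
  have hb := abs_le_one_of_hasSDR x hx
  have hx1 : x ≤ 1 := (abs_le.mp hb).2
  have hs0 : 0 ≤ Real.sqrt x := Real.sqrt_nonneg x
  have hs1 : Real.sqrt x ≤ 1 := by
    rw [show (1:ℝ) = Real.sqrt 1 by simp]
    exact Real.sqrt_le_sqrt hx1
  exact hasSDR_of_abs_le_one _ (abs_le.mpr ⟨by linarith, hs1⟩)
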